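/- For every y ≠ 1, (n+1)(P_{n+1}(y) - P_n(y))/(y - 1) = (P_n(y) + P_{n+1}(y))', where P_j denotes the j-th Legendre polynomial. -/

import Mathlib

open Polynomial

lemma iter_deriv_add (m : ℕ) (p q : ℝ[X]) :
    derivative^[m] (p + q) = derivative^[m] p + derivative^[m] q := by
  induction m generalizing p q with
  | zero => simp
  | succ k ih => simp [Function.iterate_succ_apply, ih]

lemma iter_deriv_X_mul (m : ℕ) (p : ℝ[X]) :
    derivative^[m+1] (X * p) =
      X * derivative^[m+1] p + C ((m:ℝ)+1) * derivative^[m] p := by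
  induction m generalizing p with
  | zero => simp [derivative_mul]; ring
  | succ k ih =>
    rw [Function.iterate_succ_apply, derivative_mul, derivative_X, one_mul]
    rw [iter_deriv_add, ih (derivative p)]
    rw [← Function.iterate_succ_apply, ← Function.iterate_succ_apply]
    simp only [show k+1+1 = k+2 from rfl, map_add, map_one, C_eq_natCast, Nat.cast_add,
      Nat.cast_one]
    ring
lemma iter_deriv_sq_mul (m : ℕ) (p : ℝ[X]) :
    derivative^[m+2] ((X^2 - 1) * p) =
      (X^2 - 1) * derivative^[m+2] p + C (2*((m:ℝ)+2)) * (X * derivative^[m+1] p)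
        + C (((m:ℝ)+2)*((m:ℝ)+1)) * derivative^[m] p := by
  induction m generalizing p with
  | zero =>
    simp only [derivative_mul, Function.iterate_succ_apply, Function.iterate_zero_apply]
    simp [derivative_mul, map_ofNat]
    ring
  | succ k ih =>
    rw [Function.iterate_succ_apply, derivative_mul]
    have h1 : derivative (X^2 - 1 : ℝ[X]) = C 2 * X := by
      simp [derivative_X_pow, map_ofNat]
      norm_num
    rw [h1, mul_assoc, iter_deriv_add, iterate_derivative_C_mul,
      iter_deriv_X_mul (k+1) p, ih (derivative p)]
    rw [← Function.iterate_succ_apply, ← Function.iterate_succ_apply,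
      ← Function.iterate_succ_apply]
    simp only [show k+1+1 = k+2 from rfl, show k+2+1 = k+3 from rfl, show k+1+2 = k+3 from rfl,
      map_add, map_mul, map_one, map_ofNat, C_eq_natCast, Nat.cast_add, Nat.cast_one]
    ring
open Polynomial

lemma dvd_derivative_of_pow_dvd {m : ℕ} {p : ℝ[X]} (h : (X - C 1)^(m+1) ∣ p) :
    (X - C 1)^m ∣ derivative p := by
  obtain ⟨q, rfl⟩ := h
  rw [derivative_mul, derivative_pow]
  refine dvd_add ⟨C ((m:ℝ)+1) * derivative (X - C 1) * q, ?_⟩ ⟨(X - C 1) * derivative q, ?_⟩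
  · simp only [add_tsub_cancel_right, map_add, C_1, C_eq_natCast]
    push_cast
    ring
  · ring

lemma pow_dvd_iter_deriv (k : ℕ) : ∀ (m : ℕ) (p : ℝ[X]), (X - C 1)^(m+k) ∣ p →
    (X - C 1)^m ∣ derivative^[k] p := by
  induction k with
  | zero => intro m p h; simpa using h
  | succ j ih =>
    intro m p h
    rw [Function.iterate_succ_apply]
    exact ih m (derivative p) (dvd_derivative_of_pow_dvd h)

lemma eval_one_iter_deriv {k n : ℕ} (h : k < n) :
    (derivative^[k] ((X^2 - 1 : ℝ[X])^n)).eval 1 = 0 := by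
  have hd : (X - C 1 : ℝ[X])^1 ∣ derivative^[k] ((X^2 - 1 : ℝ[X])^n) := by
    apply pow_dvd_iter_deriv
    have h2 : (X^2 - 1 : ℝ[X])^n = (X - C 1)^n * (X + C 1)^n := by
      rw [← mul_pow]
      congr 1
      simp [C_1]
      ring
    rw [h2]
    exact Dvd.dvd.mul_right (pow_dvd_pow _ (by omega)) _
  obtain ⟨q, hq⟩ := hd
  simp [hq]

lemma deriv_sq : derivative (X^2 - 1 : ℝ[X]) = C 2 * X := by
  simp [derivative_X_pow, map_ofNat]
  norm_num

lemma poly_ext {p q : ℝ[X]} (h : derivative p = derivative q) (h1 : p.eval 1 = q.eval 1) :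
    p = q := by
  have hz : derivative (p - q) = 0 := by rw [derivative_sub, h, sub_self]
  have hc := eq_C_of_derivative_eq_zero hz
  have h2 : (p - q).eval 1 = 0 := by simp [h1]
  rw [hc] at h2
  simp only [eval_C] at h2
  have : p - q = 0 := by rw [hc, h2, map_zero]
  exact sub_eq_zero.mp this

lemma deriv_f (n : ℕ) :
    derivative ((X^2 - 1 : ℝ[X])^(n+1)) = C (2*((n:ℝ)+1)) * (X * (X^2 - 1)^n) := by
  rw [derivative_pow, deriv_sq]
  simp only [add_tsub_cancel_right, map_mul, map_add, map_one, map_ofNat, C_eq_natCast]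
  push_cast
  ring

lemma key2 (n : ℕ) :
    (X^2 - 1 : ℝ[X]) * derivative^[n+2] ((X^2 - 1)^(n+1)) =
      C (((n:ℝ)+1)*((n:ℝ)+2)) * derivative^[n] ((X^2 - 1)^(n+1)) := by
  apply poly_ext
  · -- derivatives are equal
    rw [derivative_mul, deriv_sq, derivative_C_mul]
    rw [← Function.iterate_succ_apply' derivative (n+2),
      ← Function.iterate_succ_apply' derivative n]
    -- goal now: C 2 * X * d^[n+2] f + (X^2-1) * d^[n+3] f = C c * d^[n+1] f
    have hG : (X^2 - 1 : ℝ[X]) * derivative ((X^2 - 1)^(n+1)) =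
        C (2*((n:ℝ)+1)) * (X * (X^2 - 1)^(n+1)) := by
      rw [deriv_f]
      ring
    have h2 := congrArg (derivative^[n+2]) hG
    rw [iter_deriv_sq_mul n (derivative ((X^2 - 1)^(n+1))), iterate_derivative_C_mul,
      iter_deriv_X_mul (n+1) ((X^2 - 1)^(n+1))] at h2
    rw [← Function.iterate_succ_apply, ← Function.iterate_succ_apply,
      ← Function.iterate_succ_apply] at h2
    simp only [show n+1+1 = n+2 from rfl, show n+2+1 = n+3 from rfl,
      map_add, map_mul, map_one, map_ofNat, C_eq_natCast, Nat.cast_add, Nat.cast_one] at h2 ⊢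
    linear_combination h2
  · have h0 : ((X:ℝ[X])^2 - 1).eval 1 = 0 := by simp
    simp only [eval_mul, h0, zero_mul, eval_C]
    rw [eval_one_iter_deriv (show n < n+1 by omega)]
    ring

/-- The `n`-th Legendre polynomial via the Rodrigues formula. -/
noncomputable def legendre (n : ℕ) : Polynomial ℝ :=
  C ((2 ^ n * n.factorial : ℝ)⁻¹) * derivative^[n] ((X ^ 2 - 1) ^ n)

lemma hcfact (n : ℕ) :
    C (((2:ℝ) ^ (n+1) * (n+1).factorial)⁻¹) * C (2*((n:ℝ)+1)) =
      C (((2:ℝ) ^ n * n.factorial)⁻¹) := by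
  rw [← map_mul]
  congr 1
  rw [Nat.factorial_succ]
  push_cast
  have h2 : (2:ℝ)^n ≠ 0 := by positivity
  have h3 : (n.factorial : ℝ) ≠ 0 := by positivity
  have h4 : ((n:ℝ)+1) ≠ 0 := by positivity
  field_simp
  ring

lemma keyA (n : ℕ) :
    derivative (legendre (n+1)) =
      X * derivative (legendre n) + C ((n:ℝ)+1) * legendre n := by
  unfold legendre
  rw [derivative_C_mul, derivative_C_mul,
    ← Function.iterate_succ_apply' derivative (n+1), ← Function.iterate_succ_apply' derivative n]
  simp only [Nat.succ_eq_add_one]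
  rw [Function.iterate_succ_apply derivative (n+1),
    deriv_f n, iterate_derivative_C_mul, iter_deriv_X_mul n ((X^2-1)^n)]
  have hc := hcfact n
  linear_combination (X * derivative^[n+1] ((X^2-1:ℝ[X])^n) +
    C ((n:ℝ)+1) * derivative^[n] ((X^2-1:ℝ[X])^n)) * hc

lemma keyC (n : ℕ) :
    (X^2 - 1 : ℝ[X]) * derivative (legendre n) =
      C ((n:ℝ)+1) * legendre (n+1) - C ((n:ℝ)+1) * (X * legendre n) := by
  cases n with
  | zero =>
    simp [legendre, deriv_sq]
    have h2 : (C ((2:ℝ)⁻¹) * C (2:ℝ)) = 1 := by rw [← map_mul]; norm_num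
    simp only [map_ofNat] at h2
    linear_combination (-X) * h2
  | succ m =>
    unfold legendre
    rw [derivative_C_mul, ← Function.iterate_succ_apply' derivative (m+1)]
    -- expand legendre (m+2) iterate
    simp only [Nat.succ_eq_add_one]
    rw [Function.iterate_succ_apply derivative (m+1) ((X^2-1 : ℝ[X])^(m+1+1)),
      deriv_f (m+1), iterate_derivative_C_mul, iter_deriv_X_mul m ((X^2-1)^(m+1))]
    have hc := hcfact (m+1)
    have hk := key2 m
    simp only [map_add, map_mul, map_one, map_ofNat, C_eq_natCast] at hc hk ⊢
    push_cast at hc hk ⊢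
    linear_combination (C (((2:ℝ)^(m+1) * (m+1).factorial)⁻¹)) * hk +
      (-((m:ℝ[X])+2) * (X * derivative^[m+1] ((X^2-1:ℝ[X])^(m+1)) +
        ((m:ℝ[X])+1) * derivative^[m] ((X^2-1:ℝ[X])^(m+1)))) * hc

lemma keyMain (n : ℕ) :
    (X - 1 : ℝ[X]) * derivative (legendre n + legendre (n+1)) =
      C ((n:ℝ)+1) * (legendre (n+1) - legendre n) := by
  rw [derivative_add]
  linear_combination (X - 1 : ℝ[X]) * keyA n + keyC n

theorem legendre_diff_quotient_one (n : ℕ) (y : ℝ) (hy : y ≠ 1) :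
    ((n : ℝ) + 1) * ((legendre (n + 1)).eval y - (legendre n).eval y) / (y - 1) =
      (derivative (legendre n + legendre (n + 1))).eval y := by
  have h := congrArg (eval y) (keyMain n)
  simp only [eval_mul, eval_sub, eval_add, eval_one, eval_X, eval_C] at h
  rw [div_eq_iff (sub_ne_zero_of_ne hy)]
  linarith [h]
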